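/- Let f^t: ℝ^N → ℝ for t = 1..T be twice continuously differentiable with c·I ⪯ ∇²f^t everywhere (c > 0), let F be a closed convex set with diameter D, let w* minimize Σ_t f^t over F, and suppose updates w^{t+1} = P_F(w^t - η_t(g^t + ε^t)) with η_t = 1/√t, g^t = ∇f^t(w^t), ||g^t|| ≤ G, ||ε^t|| ≤ E, and ||ε^t|| ≤ (c/2)||w^t - w*|| for all t. Then the regret R(T) = Σ_{t=1}^T f^t(w^t) - Σ_{t=1}^T f^t(w*) satisfies R(T) ≤ (D²/2)√T + (G + E)²(√T - 1/2). -/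

import Mathlib

open scoped RealInnerProductSpace


-- strong convexity lemma
lemma strong_conv {n : ℕ} {c : ℝ} {f : EuclideanSpace ℝ (Fin n) → ℝ}
    (hf : ContDiff ℝ 2 f)
    (hH : ∀ w u, c * ‖u‖ ^ 2 ≤ iteratedFDeriv ℝ 2 f w ![u, u])
    (x y : EuclideanSpace ℝ (Fin n)) :
    f x + ⟪gradient f x, y - x⟫ + c / 2 * ‖y - x‖ ^ 2 ≤ f y := by
  set v := y - x with hv
  set γ : ℝ → EuclideanSpace ℝ (Fin n) := fun s => x + s • v with hγ
  have hγd : ∀ s : ℝ, HasDerivAt γ v s := by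
    intro s
    have h := ((hasDerivAt_id s).smul_const v).const_add x
    simp only [one_smul] at h
    exact h
  set φ1 : ℝ → ℝ := fun s => fderiv ℝ f (γ s) v with hφ1
  have hφd : ∀ s : ℝ, HasDerivAt (fun s => f (γ s)) (φ1 s) s := by
    intro s
    exact ((hf.differentiable two_ne_zero) (γ s)).hasFDerivAt.comp_hasDerivAt s (hγd s)
  have hf' : Differentiable ℝ (fderiv ℝ f) :=
    (hf.fderiv_right (m := 1) (by norm_num)).differentiable one_ne_zero
  have hφ1d : ∀ s : ℝ, HasDerivAt φ1 (iteratedFDeriv ℝ 2 f (γ s) ![v, v]) s := by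
    intro s
    have h1 : HasFDerivAt (fun z => fderiv ℝ f z v)
        ((ContinuousLinearMap.apply ℝ ℝ v).comp (fderiv ℝ (fderiv ℝ f) (γ s))) (γ s) :=
      (ContinuousLinearMap.apply ℝ ℝ v).hasFDerivAt.comp _ (hf' (γ s)).hasFDerivAt
    have := h1.comp_hasDerivAt s (hγd s)
    rw [iteratedFDeriv_two_apply]
    simp at this ⊢
    exact this

  have hx0 : γ 0 = x := by simp [hγ]
  have hy1 : γ 1 = y := by simp [hγ, hv]
  -- monotonicity of φ1 s - c‖v‖²s
  have hχ : ∀ s : ℝ, 0 ≤ s → φ1 0 + c * ‖v‖ ^ 2 * s ≤ φ1 s := by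
    intro s hs
    set χ : ℝ → ℝ := fun s => φ1 s - c * ‖v‖ ^ 2 * s with hχdef
    have hχd : ∀ s : ℝ, HasDerivAt χ
        (iteratedFDeriv ℝ 2 f (γ s) ![v, v] - c * ‖v‖ ^ 2) s := by
      intro s
      exact (hφ1d s).sub (((hasDerivAt_id s).const_mul (c * ‖v‖ ^ 2)).congr_deriv (by ring))
    have hmono : Monotone χ := by
      apply monotone_of_deriv_nonneg (fun s => (hχd s).differentiableAt)
      intro s
      rw [(hχd s).deriv]
      have := hH (γ s) v
      linarith
    have := hmono hs
    simp only [hχdef, mul_zero, sub_zero] at this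
    linarith
  -- now ψ
  set ψ : ℝ → ℝ := fun s => f (γ s) - s * φ1 0 - c / 2 * ‖v‖ ^ 2 * s ^ 2 with hψdef
  have hψd : ∀ s : ℝ, HasDerivAt ψ (φ1 s - φ1 0 - c * ‖v‖ ^ 2 * s) s := by
    intro s
    have h1 : HasDerivAt (fun s : ℝ => s * φ1 0) (φ1 0) s := by
      simpa using (hasDerivAt_id s).mul_const (φ1 0)
    have h2 : HasDerivAt (fun s : ℝ => c / 2 * ‖v‖ ^ 2 * s ^ 2)
        (c / 2 * ‖v‖ ^ 2 * (2 * s)) s := by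
      exact ((hasDerivAt_pow 2 s).const_mul _).congr_deriv (by ring)
    exact (((hφd s).sub h1).sub h2).congr_deriv (by ring)
  have hψmono : MonotoneOn ψ (Set.Ici (0:ℝ)) := by
    apply monotoneOn_of_deriv_nonneg (convex_Ici 0)
      (fun s _ => ((hψd s).differentiableAt.continuousAt).continuousWithinAt)
    · intro s hs
      exact (hψd s).differentiableAt.differentiableWithinAt
    · intro s hs
      rw [interior_Ici] at hs
      rw [(hψd s).deriv]
      have := hχ s (le_of_lt hs)
      linarith
  have h01 := hψmono Set.self_mem_Ici (Set.mem_Ici.2 zero_le_one) zero_le_one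
  have h01' : f x ≤ f y - φ1 0 - c / 2 * ‖v‖ ^ 2 := by
    have e0 : ψ 0 = f x := by simp [hψdef, hx0]
    have e1 : ψ 1 = f y - φ1 0 - c / 2 * ‖v‖ ^ 2 := by simp [hψdef, hy1]
    rw [e0, e1] at h01; exact h01
  have hgrad : ⟪gradient f x, y - x⟫ = φ1 0 := by
    simp only [hφ1, hx0, gradient]
    exact InnerProductSpace.toDual_symm_apply
  have hnv : ‖y - x‖ = ‖v‖ := rfl
  rw [hgrad, hnv]
  linarith

-- projection nonexpansive w.r.t. points of F
lemma proj_nonexp {n : ℕ} {F : Set (EuclideanSpace ℝ (Fin n))} (hFconv : Convex ℝ F)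
    (P : EuclideanSpace ℝ (Fin n) → EuclideanSpace ℝ (Fin n))
    (hPmem : ∀ x, P x ∈ F)
    (hPproj : ∀ x, ∀ y ∈ F, ‖x - P x‖ ≤ ‖x - y‖)
    (x : EuclideanSpace ℝ (Fin n)) {y : EuclideanSpace ℝ (Fin n)} (hy : y ∈ F) :
    ‖P x - y‖ ≤ ‖x - y‖ := by
  have hip : ⟪x - P x, y - P x⟫ ≤ 0 := by
    set p := ⟪x - P x, y - P x⟫ with hp
    set q := ‖y - P x‖ ^ 2 with hq
    have hq0 : 0 ≤ q := by positivity
    have key : ∀ θ : ℝ, 0 < θ → θ ≤ 1 → 2 * p ≤ θ * q := by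
      intro θ hθ0 hθ1
      have hmem : P x + θ • (y - P x) ∈ F := by
        have := hFconv hy (hPmem x) (le_of_lt hθ0) (by linarith) (by ring : θ + (1 - θ) = 1)
        convert this using 1
        simp [smul_sub]
        module
      have h1 := hPproj x _ hmem
      have h2 : ‖x - (P x + θ • (y - P x))‖ ^ 2
          = ‖x - P x‖ ^ 2 - 2 * θ * p + θ ^ 2 * q := by
        have e : x - (P x + θ • (y - P x)) = (x - P x) - θ • (y - P x) := by abel
        rw [e, norm_sub_sq_real, real_inner_smul_right, norm_smul]
        simp [hp, hq, abs_of_pos hθ0]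
        ring
      have h3 : ‖x - P x‖ ^ 2 ≤ ‖x - (P x + θ • (y - P x))‖ ^ 2 := by
        apply pow_le_pow_left₀ (norm_nonneg _) h1
      rw [h2] at h3
      nlinarith
    by_contra hcon
    push_neg at hcon
    have hθ : 0 < p / (q + 1) := by positivity
    have hθ1 : min 1 (p / (q + 1)) ≤ 1 := min_le_left _ _
    have hθ0 : 0 < min 1 (p / (q + 1)) := lt_min one_pos hθ
    have h4 := key _ hθ0 hθ1
    have h5 : min 1 (p / (q + 1)) * q ≤ p / (q + 1) * q := by
      apply mul_le_mul_of_nonneg_right (min_le_right _ _) hq0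
    have h6 : p / (q + 1) * q < p := by
      rw [div_mul_eq_mul_div, div_lt_iff₀ (by linarith)]
      nlinarith
    linarith
  have expand : ‖x - y‖ ^ 2 = ‖x - P x‖ ^ 2 - 2 * ⟪x - P x, y - P x⟫ + ‖P x - y‖ ^ 2 := by
    have e : x - y = (x - P x) - (y - P x) := by abel
    rw [e, norm_sub_sq_real]
    have e2 : ‖y - P x‖ = ‖P x - y‖ := norm_sub_rev _ _
    rw [e2]
  have h1 : ‖P x - y‖ ^ 2 ≤ ‖x - y‖ ^ 2 := by nlinarith [norm_nonneg (x - P x)]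
  exact pow_le_pow_iff_left₀ (norm_nonneg _) (norm_nonneg _) two_ne_zero |>.1 h1

-- sum of 1/sqrt t
lemma sum_inv_sqrt (T : ℕ) (hT : 1 ≤ T) :
    ∑ t ∈ Finset.Icc 1 T, 1 / Real.sqrt t ≤ 2 * Real.sqrt T - 1 := by
  induction T with
  | zero => omega
  | succ T ih =>
    rcases Nat.eq_or_lt_of_le hT with h1 | h1
    · simp [← h1]
      norm_num
    · have hT' : 1 ≤ T := by omega
      rw [Finset.sum_Icc_succ_top (by omega)]
      have hs : (0:ℝ) < Real.sqrt (T+1) := Real.sqrt_pos.2 (by positivity)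
      have hsT : Real.sqrt T ≤ Real.sqrt (T+1) := Real.sqrt_le_sqrt (by push_cast; linarith)
      have key : 1 / Real.sqrt (T+1) ≤ 2 * (Real.sqrt (T+1) - Real.sqrt T) := by
        rw [div_le_iff₀ hs]
        have hsq : Real.sqrt T ^ 2 = (T:ℝ) := Real.sq_sqrt (by positivity)
        have hsq1 : Real.sqrt (T+1) ^ 2 = (T:ℝ)+1 := by
          rw [Real.sq_sqrt (by positivity)]
        nlinarith [Real.sqrt_nonneg (T:ℝ), hs]
      have := ih hT'
      push_cast
      push_cast at key hsT this
      linarith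

lemma telescope (D2 : ℝ) (a : ℕ → ℝ) (T : ℕ) (hT : 1 ≤ T)
    (ha : ∀ t, 1 ≤ t → t ≤ T + 1 → a t ≤ D2) :
    ∑ t ∈ Finset.Icc 1 T, Real.sqrt t / 2 * (a t - a (t + 1)) ≤
      (D2 - a (T + 1)) * Real.sqrt T / 2 := by
  induction T with
  | zero => omega
  | succ T ih =>
    rcases Nat.eq_or_lt_of_le hT with h1 | h1
    · simp [← h1, Real.sqrt_one]
      have := ha 1 le_rfl (by omega)
      linarith
    · have hT' : 1 ≤ T := by omega
      rw [Finset.sum_Icc_succ_top (by omega)]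
      have ih' := ih hT' (fun t h1 h2 => ha t h1 (by omega))
      have hsT : Real.sqrt T ≤ Real.sqrt (T + 1) := Real.sqrt_le_sqrt (by push_cast; linarith)
      have hD2 : a (T + 1) ≤ D2 := ha (T + 1) (by omega) (by omega)
      have h2 : (D2 - a (T + 1)) * Real.sqrt T ≤ (D2 - a (T + 1)) * Real.sqrt (T + 1) :=
        mul_le_mul_of_nonneg_left hsT (by linarith)
      push_cast at h2 hsT ⊢
      nlinarith [ih', h2]
set_option maxHeartbeats 1000000 in
/-- Online projected SGD with noisy gradients g^t + ε^t, learning rate 1/√t,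
strongly convex losses (Hessian ⪰ cI), ‖g^t‖ ≤ G, ‖ε^t‖ ≤ E and
‖ε^t‖ ≤ (c/2)‖w^t - w*‖ has regret R(T) ≤ (D²/2)√T + (G + E)²(√T - 1/2). -/
theorem stmt11 (N T : ℕ) (hT : 1 ≤ T) (c : ℝ) (hc : 0 < c)
    (f : ℕ → EuclideanSpace ℝ (Fin N) → ℝ)
    (hf : ∀ t, ContDiff ℝ 2 (f t))
    (hHess : ∀ t, ∀ w u : EuclideanSpace ℝ (Fin N),
      c * ‖u‖ ^ 2 ≤ iteratedFDeriv ℝ 2 (f t) w ![u, u])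
    (F : Set (EuclideanSpace ℝ (Fin N))) (hFne : F.Nonempty)
    (hFc : IsClosed F) (hFconv : Convex ℝ F)
    (D G E : ℝ)
    (hD : ∀ w ∈ F, ∀ v ∈ F, ‖w - v‖ ≤ D)
    (P : EuclideanSpace ℝ (Fin N) → EuclideanSpace ℝ (Fin N))
    (hPmem : ∀ x, P x ∈ F)
    (hPproj : ∀ x, ∀ y ∈ F, ‖x - P x‖ ≤ ‖x - y‖)
    (w ε : ℕ → EuclideanSpace ℝ (Fin N))
    (hw1 : w 1 ∈ F)
    (hupd : ∀ t, 1 ≤ t → t ≤ T →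
      w (t + 1) = P (w t - (1 / Real.sqrt t) • (gradient (f t) (w t) + ε t)))
    (hg : ∀ t, 1 ≤ t → t ≤ T → ‖gradient (f t) (w t)‖ ≤ G)
    (hε : ∀ t, 1 ≤ t → t ≤ T → ‖ε t‖ ≤ E)
    (wstar : EuclideanSpace ℝ (Fin N)) (hws : wstar ∈ F)
    (hopt : ∀ v ∈ F, ∑ t ∈ Finset.Icc 1 T, f t wstar ≤ ∑ t ∈ Finset.Icc 1 T, f t v)
    (hεsmall : ∀ t, 1 ≤ t → t ≤ T → ‖ε t‖ ≤ c / 2 * ‖w t - wstar‖) :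
    (∑ t ∈ Finset.Icc 1 T, f t (w t)) - (∑ t ∈ Finset.Icc 1 T, f t wstar) ≤
      D ^ 2 / 2 * Real.sqrt T + (G + E) ^ 2 * (Real.sqrt T - 1 / 2) := by
  -- membership of iterates
  have hwF : ∀ t, 1 ≤ t → t ≤ T + 1 → w t ∈ F := by
    intro t
    induction t with
    | zero => omega
    | succ s _ =>
      intro _ h2
      rcases Nat.eq_zero_or_pos s with rfl | hs
      · exact hw1
      · rw [hupd s hs (by omega)]; exact hPmem _
  set a : ℕ → ℝ := fun t => ‖w t - wstar‖ ^ 2 with ha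
  -- per-step bound
  have key : ∀ t ∈ Finset.Icc 1 T, f t (w t) - f t wstar ≤
      Real.sqrt t / 2 * (a t - a (t + 1)) + 1 / Real.sqrt t / 2 * (G + E) ^ 2 := by
    intro t ht
    rw [Finset.mem_Icc] at ht
    obtain ⟨ht1, ht2⟩ := ht
    have htpos : (0:ℝ) < t := by exact_mod_cast ht1
    have hst : 1 ≤ Real.sqrt t := by
      rw [show (1:ℝ) = Real.sqrt 1 by rw [Real.sqrt_one]]
      exact Real.sqrt_le_sqrt (by exact_mod_cast ht1)
    have hst0 : 0 < Real.sqrt t := by linarith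
    set g := gradient (f t) (w t) with hgdef
    set u := g + ε t with hudef
    set v := w t - wstar with hvdef
    -- (A)
    have hA : f t (w t) - f t wstar ≤ ⟪u, v⟫ := by
      have hsc := strong_conv (hf t) (hHess t) (w t) wstar
      have e1 : ⟪g, wstar - w t⟫ = -⟪g, v⟫ := by
        rw [show wstar - w t = -v by rw [hvdef]; abel, inner_neg_right]
      have e2 : ‖wstar - w t‖ = ‖v‖ := norm_sub_rev _ _
      rw [e1, e2] at hsc
      have e3 : ⟪u, v⟫ = ⟪g, v⟫ + ⟪ε t, v⟫ := inner_add_left _ _ _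
      have e4 : |⟪ε t, v⟫| ≤ ‖ε t‖ * ‖v‖ := abs_real_inner_le_norm _ _
      have e5 : ‖ε t‖ * ‖v‖ ≤ c / 2 * ‖v‖ * ‖v‖ :=
        mul_le_mul_of_nonneg_right (hεsmall t ht1 ht2) (norm_nonneg _)
      have e6 : -⟪ε t, v⟫ ≤ ‖ε t‖ * ‖v‖ := (abs_le.1 e4).1 |> neg_le.1 |>.trans_eq rfl
      rw [e3]
      nlinarith [e6, e5, hsc]
    -- (B)
    have hB : a (t + 1) ≤ a t - 2 * (1 / Real.sqrt t) * ⟪u, v⟫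
        + (1 / Real.sqrt t) ^ 2 * ‖u‖ ^ 2 := by
      have h1 : ‖w (t + 1) - wstar‖ ≤ ‖(w t - (1 / Real.sqrt t) • u) - wstar‖ := by
        rw [hupd t ht1 ht2]
        exact proj_nonexp hFconv P hPmem hPproj _ hws
      have h2 : a (t + 1) ≤ ‖(w t - (1 / Real.sqrt t) • u) - wstar‖ ^ 2 :=
        pow_le_pow_left₀ (norm_nonneg _) h1 2
      have e : (w t - (1 / Real.sqrt t) • u) - wstar = v - (1 / Real.sqrt t) • u := by
        rw [hvdef]; abel
      rw [e, norm_sub_sq_real, real_inner_smul_right, norm_smul] at h2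
      have e7 : ⟪v, u⟫ = ⟪u, v⟫ := real_inner_comm _ _
      rw [e7] at h2
      have e8 : ‖(1 / Real.sqrt t : ℝ)‖ = 1 / Real.sqrt t := by
        rw [Real.norm_eq_abs, abs_of_pos (by positivity)]
      rw [e8] at h2
      calc a (t + 1) ≤ ‖v‖ ^ 2 - 2 * (1 / Real.sqrt t * ⟪u, v⟫)
            + (1 / Real.sqrt t * ‖u‖) ^ 2 := h2
        _ = a t - 2 * (1 / Real.sqrt t) * ⟪u, v⟫ + (1 / Real.sqrt t) ^ 2 * ‖u‖ ^ 2 := by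
            rw [ha]; ring
    have hu : ‖u‖ ≤ G + E := by
      calc ‖u‖ ≤ ‖g‖ + ‖ε t‖ := norm_add_le _ _
        _ ≤ G + E := add_le_add (hg t ht1 ht2) (hε t ht1 ht2)
    have hu2 : ‖u‖ ^ 2 ≤ (G + E) ^ 2 := pow_le_pow_left₀ (norm_nonneg _) hu 2
    -- combine
    have hinv : (1 / Real.sqrt t) * Real.sqrt t = 1 := by field_simp
    have hmid : ⟪u, v⟫ ≤ Real.sqrt t / 2 * (a t - a (t + 1))
        + 1 / Real.sqrt t / 2 * ‖u‖ ^ 2 := by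
      have h3 := mul_le_mul_of_nonneg_left hB (by positivity : (0:ℝ) ≤ Real.sqrt t / 2)
      have e : ∀ s A I U : ℝ, 0 < s →
          s / 2 * (A - 2 * (1 / s) * I + (1 / s) ^ 2 * U)
            = s / 2 * A - I + 1 / s / 2 * U := by
        intro s A I U hs
        field_simp
      rw [e (Real.sqrt t) (a t) ⟪u, v⟫ (‖u‖ ^ 2) hst0] at h3
      linarith
    have hlast : 1 / Real.sqrt t / 2 * ‖u‖ ^ 2 ≤ 1 / Real.sqrt t / 2 * (G + E) ^ 2 :=
      mul_le_mul_of_nonneg_left hu2 (by positivity)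
    linarith [hA, hmid, hlast]
  -- sum up
  have hsum : (∑ t ∈ Finset.Icc 1 T, f t (w t)) - (∑ t ∈ Finset.Icc 1 T, f t wstar)
      = ∑ t ∈ Finset.Icc 1 T, (f t (w t) - f t wstar) := by
    rw [Finset.sum_sub_distrib]
  rw [hsum]
  have hb1 := Finset.sum_le_sum key
  have hsplit : ∑ t ∈ Finset.Icc 1 T,
      (Real.sqrt t / 2 * (a t - a (t + 1)) + 1 / Real.sqrt t / 2 * (G + E) ^ 2)
      = (∑ t ∈ Finset.Icc 1 T, Real.sqrt t / 2 * (a t - a (t + 1)))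
        + (∑ t ∈ Finset.Icc 1 T, 1 / Real.sqrt t) / 2 * (G + E) ^ 2 := by
    rw [Finset.sum_add_distrib, Finset.sum_div, Finset.sum_mul]
  rw [hsplit] at hb1
  -- telescoping bound
  have haD : ∀ t, 1 ≤ t → t ≤ T + 1 → a t ≤ D ^ 2 := by
    intro t h1 h2
    exact pow_le_pow_left₀ (norm_nonneg _) (hD (w t) (hwF t h1 h2) wstar hws) 2
  have htel := telescope (D ^ 2) a T hT haD
  have haT1 : 0 ≤ a (T + 1) := by positivity
  have hsqT : 0 ≤ Real.sqrt T := Real.sqrt_nonneg _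
  have htel2 : (∑ t ∈ Finset.Icc 1 T, Real.sqrt t / 2 * (a t - a (t + 1)))
      ≤ D ^ 2 / 2 * Real.sqrt T := by nlinarith [htel]
  have hgs := sum_inv_sqrt T hT
  have hGE : 0 ≤ (G + E) ^ 2 := sq_nonneg _
  have hsum2 : (∑ t ∈ Finset.Icc 1 T, 1 / Real.sqrt t) / 2 * (G + E) ^ 2
      ≤ (G + E) ^ 2 * (Real.sqrt T - 1 / 2) := by nlinarith [hgs]
  linarith [hb1, htel2, hsum2]
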